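/- Let u, v > 0 be real numbers and suppose k > 2 is a real number such that |π − p/q| < 1/q^k holds for only finitely many coprime positive integers (p, q), and that u − (k−1)·v > 0. Then the sequence 1/(n^u · |sin n|^v) tends to 0 as n → ∞. -/

import Mathlib

open Real Filter

-- π is not a ratio of naturals
lemma pi_ne_nat_div (p q : ℕ) : π ≠ (p : ℝ) / (q : ℝ) := by
  intro h
  exact irrational_pi ⟨(p : ℚ) / (q : ℚ), by push_cast; exact h.symm⟩

-- From the finiteness hypothesis, get a uniform constant for coprime pairs
lemma pi_rat_c_bound (k : ℝ) (hk : 0 < k)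
    (hfin : {pq : ℕ × ℕ | 0 < pq.1 ∧ 0 < pq.2 ∧ Nat.Coprime pq.1 pq.2 ∧
        |π - (pq.1 : ℝ) / (pq.2 : ℝ)| < 1 / (pq.2 : ℝ) ^ k}.Finite) :
    ∃ c : ℝ, 0 < c ∧ c ≤ 1 ∧ ∀ p q : ℕ, 0 < p → 0 < q →
      c / (q : ℝ) ^ k ≤ |π - (p : ℝ) / (q : ℝ)| := by
  classical
  set f : ℕ × ℕ → ℝ := fun pq => |π - (pq.1 : ℝ) / (pq.2 : ℝ)| * (pq.2 : ℝ) ^ k with hf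
  set T : Finset ℝ := insert (1 : ℝ) (hfin.toFinset.image f) with hT
  have hTne : T.Nonempty := ⟨1, Finset.mem_insert_self _ _⟩
  set c : ℝ := T.min' hTne with hc
  have hc1 : c ≤ 1 := Finset.min'_le _ _ (Finset.mem_insert_self _ _)
  have hcpos : 0 < c := by
    rw [hc, Finset.lt_min'_iff]
    intro b hb
    rcases Finset.mem_insert.1 hb with rfl | hb
    · norm_num
    · rcases Finset.mem_image.1 hb with ⟨pq, hpq, rfl⟩
      have hmem := hfin.mem_toFinset.1 hpq
      obtain ⟨hp, hq, _, _⟩ := hmem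
      have hq' : (0 : ℝ) < (pq.2 : ℝ) := by exact_mod_cast hq
      have h1 : 0 < |π - (pq.1 : ℝ) / (pq.2 : ℝ)| :=
        abs_pos.2 (sub_ne_zero.2 (pi_ne_nat_div _ _))
      exact mul_pos h1 (rpow_pos_of_pos hq' k)
  refine ⟨c, hcpos, hc1, ?_⟩
  -- first, the bound for coprime pairs
  have hcop : ∀ p q : ℕ, 0 < p → 0 < q → Nat.Coprime p q →
      c / (q : ℝ) ^ k ≤ |π - (p : ℝ) / (q : ℝ)| := by
    intro p q hp hq hco
    have hq' : (0 : ℝ) < (q : ℝ) := by exact_mod_cast hq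
    have hqk : (0 : ℝ) < (q : ℝ) ^ k := rpow_pos_of_pos hq' k
    by_cases hmem : (p, q) ∈ hfin.toFinset
    · have : c ≤ f (p, q) := Finset.min'_le _ _
        (Finset.mem_insert_of_mem (Finset.mem_image_of_mem f hmem))
      rw [hf] at this
      simp only at this
      rw [div_le_iff₀ hqk]
      exact this
    · have hnot := hfin.mem_toFinset.not.1 hmem
      simp only [Set.mem_setOf_eq, not_and, not_lt] at hnot
      have h1 : 1 / (q : ℝ) ^ k ≤ |π - (p : ℝ) / (q : ℝ)| := hnot hp hq hco
      calc c / (q : ℝ) ^ k ≤ 1 / (q : ℝ) ^ k := by gcongr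
        _ ≤ _ := h1
  -- now extend to all pairs via the reduced fraction
  intro p q hp hq
  set d := Nat.gcd p q with hd
  have hdpos : 0 < d := Nat.gcd_pos_of_pos_left _ hp
  set p' := p / d with hp'
  set q' := q / d with hq'
  have hp'pos : 0 < p' := Nat.div_pos (Nat.le_of_dvd hp (Nat.gcd_dvd_left p q)) hdpos
  have hq'pos : 0 < q' := Nat.div_pos (Nat.le_of_dvd hq (Nat.gcd_dvd_right p q)) hdpos
  have hco : Nat.Coprime p' q' := Nat.coprime_div_gcd_div_gcd hdpos
  have hpe : p' * d = p := Nat.div_mul_cancel (Nat.gcd_dvd_left p q)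
  have hqe : q' * d = q := Nat.div_mul_cancel (Nat.gcd_dvd_right p q)
  have hd0 : ((d : ℝ)) ≠ 0 := by exact_mod_cast hdpos.ne'
  have heq : (p : ℝ) / (q : ℝ) = (p' : ℝ) / (q' : ℝ) := by
    rw [← hpe, ← hqe]
    push_cast
    rw [mul_div_mul_right _ _ hd0]
  have hq'le : (q' : ℝ) ≤ (q : ℝ) := by
    exact_mod_cast Nat.div_le_self q d
  have hq'' : (0 : ℝ) < (q' : ℝ) := by exact_mod_cast hq'pos
  calc c / (q : ℝ) ^ k ≤ c / (q' : ℝ) ^ k := by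
        gcongr
    _ ≤ |π - (p' : ℝ) / (q' : ℝ)| := hcop p' q' hp'pos hq'pos hco
    _ = |π - (p : ℝ) / (q : ℝ)| := by rw [heq]

open Real Filter in
theorem seq_tendsto_zero (u v k : ℝ) (hu : 0 < u) (hv : 0 < v) (hk : 2 < k)
    (hfin : {pq : ℕ × ℕ | 0 < pq.1 ∧ 0 < pq.2 ∧ Nat.Coprime pq.1 pq.2 ∧
        |π - (pq.1 : ℝ) / (pq.2 : ℝ)| < 1 / (pq.2 : ℝ) ^ k}.Finite)
    (huv : 0 < u - (k - 1) * v) :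
    Tendsto (fun n : ℕ => 1 / ((n : ℝ) ^ u * |Real.sin n| ^ v)) atTop (nhds 0) := by
  obtain ⟨c, hcpos, hc1, hbound⟩ := pi_rat_c_bound k (by linarith) hfin
  have hπ : (0 : ℝ) < π := pi_pos
  set C : ℝ := 2 * c / π with hC
  have hCpos : 0 < C := by positivity
  -- key lower bound on |sin n|
  have hsin : ∀ n : ℕ, 2 ≤ n → C * (n : ℝ) ^ (1 - k) ≤ |Real.sin n| := by
    intro n hn
    have hn' : (2 : ℝ) ≤ (n : ℝ) := by exact_mod_cast hn
    have hnpos : (0 : ℝ) < (n : ℝ) := by linarith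
    set m : ℤ := round ((n : ℝ) / π) with hm
    have hround : |(n : ℝ) / π - (m : ℝ)| ≤ 1 / 2 := abs_sub_round _
    have hround1 : (n : ℝ) / π - (m : ℝ) ≤ 1 / 2 := (abs_le.1 hround).2
    have hround2 : -(1 / 2) ≤ (n : ℝ) / π - (m : ℝ) := (abs_le.1 hround).1
    have hπlt : π < 3.15 := pi_lt_d2
    have hπgt : 3 < π := pi_gt_three
    have hdiv2 : (2 : ℝ) / π ≤ (n : ℝ) / π := by gcongr
    have hhalf : (1 : ℝ) / 2 < 2 / π := by
      rw [div_lt_div_iff₀ (by norm_num) hπ]; nlinarith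
    have hmlb : (0 : ℝ) < (m : ℝ) := by linarith
    have hdiv3 : (n : ℝ) / π ≤ (n : ℝ) / 3 := by gcongr
    have hmub : (m : ℝ) ≤ (n : ℝ) := by
      have : (n : ℝ) / 3 + 1 / 2 ≤ (n : ℝ) := by linarith
      linarith
    set M : ℕ := m.toNat with hMdef
    have hM : (M : ℝ) = (m : ℝ) := by
      have : ((m.toNat : ℤ) : ℝ) = (m : ℝ) := by
        rw [Int.toNat_of_nonneg]
        exact_mod_cast hmlb.le
      exact_mod_cast this
    have hMpos : 0 < M := by
      have : (0 : ℝ) < (M : ℝ) := hM ▸ hmlb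
      exact_mod_cast this
    have hMpos' : (0 : ℝ) < (M : ℝ) := hM ▸ hmlb
    have hMle : (M : ℝ) ≤ (n : ℝ) := hM ▸ hmub
    -- |sin n| = |sin (n - mπ)|
    have hsineq : |Real.sin (n : ℝ)| = |Real.sin ((n : ℝ) - (m : ℝ) * π)| := by
      rw [show (n : ℝ) = ((n : ℝ) - (m : ℝ) * π) + (m : ℝ) * π by ring,
        Real.sin_add_int_mul_pi, abs_mul]
      have h1 : |((-1 : ℝ)) ^ m| = 1 := by
        rcases Int.even_or_odd m with he | ho
        · rw [he.neg_one_zpow]; norm_num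
        · rw [ho.neg_one_zpow]; norm_num
      rw [h1, one_mul]; ring_nf
    have habs : |(n : ℝ) - (m : ℝ) * π| ≤ π / 2 := by
      have heq : (n : ℝ) - (m : ℝ) * π = ((n : ℝ) / π - (m : ℝ)) * π := by
        field_simp
      rw [heq, abs_mul, abs_of_pos hπ]
      calc |(n : ℝ) / π - (m : ℝ)| * π ≤ (1 / 2) * π := by gcongr
        _ = π / 2 := by ring
    have hjordan : 2 / π * |(n : ℝ) - (m : ℝ) * π| ≤ |Real.sin ((n : ℝ) - (m : ℝ) * π)| :=
      Real.mul_abs_le_abs_sin habs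
    have hdist : |(n : ℝ) - (m : ℝ) * π| = (M : ℝ) * |π - (n : ℝ) / (M : ℝ)| := by
      have heq : (n : ℝ) - (m : ℝ) * π = -((M : ℝ) * (π - (n : ℝ) / (M : ℝ))) := by
        rw [← hM]; field_simp; ring
      rw [heq, abs_neg, abs_mul, abs_of_pos hMpos']
    have hfrac : c / (M : ℝ) ^ k ≤ |π - (n : ℝ) / (M : ℝ)| :=
      hbound n M (by omega) hMpos
    have hMk : (M : ℝ) ^ (1 - k) = (M : ℝ) / (M : ℝ) ^ k := by
      rw [rpow_sub hMpos', rpow_one]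
    have hmono : (n : ℝ) ^ (1 - k) ≤ (M : ℝ) ^ (1 - k) :=
      rpow_le_rpow_of_nonpos hMpos' hMle (by linarith)
    calc C * (n : ℝ) ^ (1 - k) ≤ C * (M : ℝ) ^ (1 - k) := by gcongr
      _ = 2 / π * ((M : ℝ) * (c / (M : ℝ) ^ k)) := by
          rw [hMk, hC]; ring
      _ ≤ 2 / π * ((M : ℝ) * |π - (n : ℝ) / (M : ℝ)|) := by
          gcongr
      _ = 2 / π * |(n : ℝ) - (m : ℝ) * π| := by rw [hdist]
      _ ≤ |Real.sin ((n : ℝ) - (m : ℝ) * π)| := hjordan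
      _ = |Real.sin (n : ℝ)| := hsineq.symm
  -- now the squeeze
  set ε : ℝ := u - (k - 1) * v with hε
  have hupper : ∀ᶠ n : ℕ in atTop,
      1 / ((n : ℝ) ^ u * |Real.sin n| ^ v) ≤ 1 / C ^ v * (n : ℝ) ^ (-ε) := by
    filter_upwards [eventually_ge_atTop 2] with n hn
    have hn' : (2 : ℝ) ≤ (n : ℝ) := by exact_mod_cast hn
    have hnpos : (0 : ℝ) < (n : ℝ) := by linarith
    have h1 : C ^ v * (n : ℝ) ^ ε ≤ (n : ℝ) ^ u * |Real.sin n| ^ v := by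
      have h2 : (C * (n : ℝ) ^ (1 - k)) ^ v ≤ |Real.sin n| ^ v :=
        rpow_le_rpow (by positivity) (hsin n hn) hv.le
      have h3 : (C * (n : ℝ) ^ (1 - k)) ^ v = C ^ v * (n : ℝ) ^ ((1 - k) * v) := by
        rw [mul_rpow hCpos.le (rpow_nonneg hnpos.le _), ← Real.rpow_mul hnpos.le]
      have h4 : C ^ v * (n : ℝ) ^ ε = (n : ℝ) ^ u * (C ^ v * (n : ℝ) ^ ((1 - k) * v)) := by
        rw [show ε = u + (1 - k) * v by rw [hε]; ring, Real.rpow_add hnpos]; ring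
      rw [h4]
      rw [h3] at h2
      gcongr
    have hpos : 0 < C ^ v * (n : ℝ) ^ ε := by positivity
    have h5 := one_div_le_one_div_of_le hpos h1
    have h6 : 1 / C ^ v * (n : ℝ) ^ (-ε) = 1 / (C ^ v * (n : ℝ) ^ ε) := by
      rw [Real.rpow_neg hnpos.le]
      field_simp
    rw [h6]
    exact h5
  have hlow : ∀ᶠ n : ℕ in atTop, 0 ≤ 1 / ((n : ℝ) ^ u * |Real.sin n| ^ v) :=
    Eventually.of_forall fun n => by positivity
  have hg : Tendsto (fun n : ℕ => 1 / C ^ v * (n : ℝ) ^ (-ε)) atTop (nhds 0) := by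
    have h := (tendsto_rpow_neg_atTop huv).comp tendsto_natCast_atTop_atTop
    have h' := h.const_mul (1 / C ^ v)
    simpa using h'
  exact squeeze_zero' hlow hupper hg
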